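/- Let q be an odd prime power and let α ∈ F_{q⁴} be a root of a monic irreducible quartic f ∈ F_q[x]. Set α₁ = α, α₂ = α^q, α₃ = α^{q²}, α₄ = α^{q³}. Then there is a unique involution Γ ∈ PGL₂(F_q) that swaps α₁ with α₃ and α₂ with α₄. -/

import Mathlib

open Matrix
open scoped LinearAlgebra.Projectivization

/-- The Möbius action of `GL(2,K)` on the projective line `ℙ K (Fin 2 → K)`.
Since scalar matrices act trivially, this realizes the action of `PGL₂(K)`. -/
noncomputable def mobius {K : Type*} [Field K] (M : GL (Fin 2) K)
    (p : ℙ K (Fin 2 → K)) : ℙ K (Fin 2 → K) :=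
  Projectivization.map
    (LinearMap.GeneralLinearGroup.toLinearEquiv
      (Matrix.GeneralLinearGroup.toLin M)).toLinearMap
    (LinearEquiv.injective _) p

/-- The point `[x : 1]` of the projective line. -/
noncomputable def pt {K : Type*} [Field K] (x : K) : ℙ K (Fin 2 → K) :=
  Projectivization.mk K ![x, 1] (by
    intro h
    simpa using congrFun h 1)

section Aux
open Polynomial

variable {K : Type*} [Field K]

lemma mulVec_gl_ne_zero (M : GL (Fin 2) K) {v : Fin 2 → K} (hv : v ≠ 0) :
    (M : Matrix (Fin 2) (Fin 2) K).mulVec v ≠ 0 := by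
  intro h
  refine (LinearEquiv.injective (LinearMap.GeneralLinearGroup.toLinearEquiv
    (Matrix.GeneralLinearGroup.toLin M))).ne hv ?_
  rw [map_zero]
  show (Matrix.GeneralLinearGroup.toLin M).toLinearEquiv v = 0
  simpa using h

lemma mobius_mk (M : GL (Fin 2) K) (v : Fin 2 → K) (hv : v ≠ 0) :
    mobius M (Projectivization.mk K v hv) =
      Projectivization.mk K ((M : Matrix (Fin 2) (Fin 2) K).mulVec v)
        (mulVec_gl_ne_zero M hv) := by
  unfold mobius
  rw [Projectivization.map_mk, Projectivization.mk_eq_mk_iff']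
  exact ⟨1, by simp [Matrix.GeneralLinearGroup.toLin_apply]⟩

lemma mobius_one (p : ℙ K (Fin 2 → K)) : mobius (1 : GL (Fin 2) K) p = p := by
  induction p using Projectivization.ind with
  | h v hv =>
    rw [mobius_mk, Projectivization.mk_eq_mk_iff']
    exact ⟨1, by simp⟩

lemma mobius_pt (M : GL (Fin 2) K) (x y : K)
    (hden : (M : Matrix (Fin 2) (Fin 2) K) 1 0 * x + (M : Matrix (Fin 2) (Fin 2) K) 1 1 ≠ 0)
    (heq : (M : Matrix (Fin 2) (Fin 2) K) 0 0 * x + (M : Matrix (Fin 2) (Fin 2) K) 0 1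
      = y * ((M : Matrix (Fin 2) (Fin 2) K) 1 0 * x + (M : Matrix (Fin 2) (Fin 2) K) 1 1)) :
    mobius M (pt x) = pt y := by
  unfold pt
  rw [mobius_mk, Projectivization.mk_eq_mk_iff]
  refine ⟨Units.mk0 _ hden, ?_⟩
  funext i
  fin_cases i <;>
    simp [Matrix.mulVec, dotProduct, Fin.sum_univ_two] <;>
    linear_combination -heq

lemma mobius_pt_rev (M : GL (Fin 2) K) (x y : K)
    (h : mobius M (pt x) = pt y) :
    (M : Matrix (Fin 2) (Fin 2) K) 0 0 * x + (M : Matrix (Fin 2) (Fin 2) K) 0 1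
      = y * ((M : Matrix (Fin 2) (Fin 2) K) 1 0 * x + (M : Matrix (Fin 2) (Fin 2) K) 1 1) := by
  unfold pt at h
  rw [mobius_mk, Projectivization.mk_eq_mk_iff] at h
  obtain ⟨u, hu⟩ := h
  have h0 := congrFun hu 0
  have h1 := congrFun hu 1
  simp [Matrix.mulVec, dotProduct, Fin.sum_univ_two, Units.smul_def] at h0 h1
  rw [← h0, ← h1]; ring

lemma mobius_smul_eq (M M' : GL (Fin 2) K) (t : K) (ht : t ≠ 0)
    (h : (M' : Matrix (Fin 2) (Fin 2) K) = t • (M : Matrix (Fin 2) (Fin 2) K)) :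
    ∀ p, mobius M' p = mobius M p := by
  intro p
  induction p using Projectivization.ind with
  | h v hv =>
    rw [mobius_mk, mobius_mk, Projectivization.mk_eq_mk_iff]
    refine ⟨Units.mk0 t ht, ?_⟩
    rw [h]
    simp [Matrix.smul_mulVec, Units.smul_def, mul_add]

lemma mobius_mul (M N : GL (Fin 2) K) (p : ℙ K (Fin 2 → K)) :
    mobius (M * N) p = mobius M (mobius N p) := by
  induction p using Projectivization.ind with
  | h v hv =>
    rw [mobius_mk, mobius_mk, mobius_mk, Projectivization.mk_eq_mk_iff']
    exact ⟨1, by rw [one_smul, Units.val_mul, Matrix.mulVec_mulVec]⟩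

lemma glmap_entry {F : Type*} [Field F] (φ : F →+* K) (M : GL (Fin 2) F) (i j : Fin 2) :
    ((Matrix.GeneralLinearGroup.map φ M : GL (Fin 2) K) : Matrix (Fin 2) (Fin 2) K) i j
      = φ ((M : Matrix (Fin 2) (Fin 2) F) i j) := by
  simp [Matrix.GeneralLinearGroup.map, Matrix.map_apply]

lemma card_pow_le_of_forall_pow_eq {F K : Type*} [Field F] [Fintype F] [Field K] [Fintype K]
    [Algebra F K] {ι : Type*} [Fintype ι] (m : ℕ) (hm : 1 < m)
    (hadd : ∀ x y : K, (x + y) ^ m = x ^ m + y ^ m)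
    (hsc : ∀ a : F, (algebraMap F K a) ^ m = algebraMap F K a)
    (v : ι → K) (hfix : ∀ i, v i ^ m = v i)
    (hind : LinearIndependent F v) :
    Fintype.card F ^ Fintype.card ι ≤ m := by
  classical
  set W := Submodule.span F (Set.range v) with hWdef
  have hW : ∀ x ∈ W, x ^ m = x := by
    intro x hx
    induction hx using Submodule.span_induction with
    | mem x h => obtain ⟨i, rfl⟩ := h; exact hfix i
    | zero => exact zero_pow (by omega)
    | add x y _ _ ihx ihy => rw [hadd, ihx, ihy]
    | smul a x _ ih => rw [Algebra.smul_def, mul_pow, hsc, ih]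
  haveI : Fintype W := Fintype.ofFinite W
  have h1 : Fintype.card W = Fintype.card F ^ Module.finrank F W :=
    Module.card_eq_pow_finrank (K := F) (V := W)
  have h2 : Module.finrank F W = Fintype.card ι := finrank_span_eq_card hind
  have hPdeg : (X ^ m - X : K[X]).natDegree = m := by
    rw [natDegree_sub_eq_left_of_natDegree_lt] <;>
      simp [natDegree_X_pow, natDegree_X] <;> omega
  have hP0 : (X ^ m - X : K[X]) ≠ 0 := by
    intro h; rw [h] at hPdeg; simp at hPdeg; omega
  have key : Fintype.card W ≤ m := by
    have hsub : (W : Set K).toFinset ⊆ (X ^ m - X : K[X]).roots.toFinset := by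
      intro x hx
      rw [Set.mem_toFinset] at hx
      rw [Multiset.mem_toFinset, Polynomial.mem_roots hP0]
      simp [Polynomial.IsRoot, sub_eq_zero, hW x hx]
    calc Fintype.card W = (W : Set K).toFinset.card := by
          rw [Set.toFinset_card]; rfl
      _ ≤ (X ^ m - X : K[X]).roots.toFinset.card := Finset.card_le_card hsub
      _ ≤ Multiset.card (X ^ m - X : K[X]).roots := Multiset.toFinset_card_le _
      _ ≤ (X ^ m - X : K[X]).natDegree := Polynomial.card_roots' _
      _ = m := hPdeg
  rw [h1, h2] at key
  exact key

end Aux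

open Polynomial in

/-- Let `q` be an odd prime power, `F` the field with `q` elements, `K = F_{q⁴}` a quartic
extension of `F`, and `α ∈ K` a root of a monic irreducible quartic `f ∈ F[x]`.  Setting
`α₁ = α`, `α₂ = α^q`, `α₃ = α^{q²}`, `α₄ = α^{q³}`, there is an involution in `PGL₂(F)`
(represented by a matrix `M ∈ GL₂(F)`, acting on `ℙ¹(K)` through `F ⊆ K`) that swaps
`α₁` with `α₃` and `α₂` with `α₄`, and it is unique as an element of `PGL₂(F)`. -/
theorem unique_involution_for_irreducible_quartic
    {F : Type*} [Field F] [Fintype F] (q : ℕ) (hq : Fintype.card F = q)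
    (hodd : Odd q)
    {K : Type*} [Field K] [Fintype K] [Algebra F K]
    (hK : Fintype.card K = q ^ 4)
    (f : Polynomial F) (hmonic : f.Monic) (hirr : Irreducible f)
    (hdeg : f.natDegree = 4)
    (α : K) (hroot : Polynomial.aeval α f = 0) :
    ∃ M : GL (Fin 2) F,
      mobius (Matrix.GeneralLinearGroup.map (algebraMap F K) M) (pt α) = pt (α ^ q ^ 2) ∧
      mobius (Matrix.GeneralLinearGroup.map (algebraMap F K) M) (pt (α ^ q ^ 2)) = pt α ∧
      mobius (Matrix.GeneralLinearGroup.map (algebraMap F K) M) (pt (α ^ q)) = pt (α ^ q ^ 3) ∧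
      mobius (Matrix.GeneralLinearGroup.map (algebraMap F K) M) (pt (α ^ q ^ 3)) = pt (α ^ q) ∧
      (∀ p, mobius (Matrix.GeneralLinearGroup.map (algebraMap F K) M)
        (mobius (Matrix.GeneralLinearGroup.map (algebraMap F K) M) p) = p) ∧
      (∀ M' : GL (Fin 2) F,
        mobius (Matrix.GeneralLinearGroup.map (algebraMap F K) M') (pt α) = pt (α ^ q ^ 2) →
        mobius (Matrix.GeneralLinearGroup.map (algebraMap F K) M') (pt (α ^ q ^ 2)) = pt α →
        mobius (Matrix.GeneralLinearGroup.map (algebraMap F K) M') (pt (α ^ q)) = pt (α ^ q ^ 3) →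
        mobius (Matrix.GeneralLinearGroup.map (algebraMap F K) M') (pt (α ^ q ^ 3)) = pt (α ^ q) →
        ∀ p, mobius (Matrix.GeneralLinearGroup.map (algebraMap F K) M') p =
          mobius (Matrix.GeneralLinearGroup.map (algebraMap F K) M) p) := by
  classical
  have hinj : Function.Injective (algebraMap F K) := (algebraMap F K).injective
  have hq2 : 1 < q := hq ▸ Fintype.one_lt_card
  -- characteristic
  haveI hcF : CharP F (ringChar F) := ringChar.charP F
  obtain ⟨n, hp, hcard⟩ := FiniteField.card F (ringChar F)
  haveI : Fact (ringChar F).Prime := ⟨hp⟩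
  haveI : CharP K (ringChar F) := charP_of_injective_algebraMap hinj (ringChar F)
  have hqpn : q = ringChar F ^ (n : ℕ) := by rw [← hq, hcard]
  -- frobenius facts
  have hadd : ∀ x y : K, (x + y) ^ q = x ^ q + y ^ q := by
    intro x y; rw [hqpn]; exact add_pow_char_pow x y (ringChar F) n
  have hadd2 : ∀ x y : K, (x + y) ^ q ^ 2 = x ^ q ^ 2 + y ^ q ^ 2 := by
    intro x y
    rw [pow_two, pow_mul, pow_mul, pow_mul, hadd, hadd]
  have hscF : ∀ r : F, r ^ q = r := by intro r; rw [← hq]; exact FiniteField.pow_card r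
  have hsc : ∀ r : F, (algebraMap F K r) ^ q = algebraMap F K r := by
    intro r; rw [← map_pow, hscF]
  have hsc2 : ∀ r : F, (algebraMap F K r) ^ q ^ 2 = algebraMap F K r := by
    intro r; rw [pow_two, pow_mul, hsc, hsc]
  have hα4 : α ^ q ^ 4 = α := by rw [← hK]; exact FiniteField.pow_card α
  have hpow : ∀ i j : ℕ, (α ^ q ^ i) ^ q ^ j = α ^ q ^ (i + j) := by
    intro i j; rw [← pow_mul, ← pow_add]
  have hpow1 : ∀ i : ℕ, (α ^ q ^ i) ^ q = α ^ q ^ (i + 1) := by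
    intro i; rw [← pow_mul, pow_succ]
  -- minimal polynomial
  have hmin : minpoly F α = f := (minpoly.eq_of_irreducible_of_monic hirr hroot hmonic).symm
  have hdegmin : (minpoly F α).natDegree = 4 := by rw [hmin, hdeg]
  have hnotF0 : ∀ r : F, α ≠ algebraMap F K r := by
    intro r h
    have h2 : minpoly F α = X - Polynomial.C r := by rw [h]; exact minpoly.eq_X_sub_C K r
    rw [h2] at hdegmin
    simp [natDegree_X_sub_C] at hdegmin
  have hnotF : ∀ i : ℕ, i ≤ 4 → ∀ r : F, α ^ q ^ i ≠ algebraMap F K r := by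
    intro i hi r h
    refine hnotF0 (r ^ q ^ (4 - i)) ?_
    rw [map_pow, ← h, hpow]
    rw [show i + (4 - i) = 4 by omega, hα4]
  -- α has degree 4: powers independent
  have hindpow : LinearIndependent F fun i : Fin 4 => α ^ (i : ℕ) := by
    have h4 := linearIndependent_pow (K := F) (S := K) α
    rwa [hdegmin] at h4
  have hind3 : LinearIndependent F ![(1 : K), α, α ^ 2] := by
    have h3 := hindpow.comp (Fin.castLE (by norm_num : 3 ≤ 4))
      (Fin.castLE_injective _)
    convert h3 using 1
    funext i
    fin_cases i <;> simp
  -- α ≠ α^{q²}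
  have hne13 : α ≠ α ^ q ^ 2 := by
    intro h
    have hfix : ∀ i, (![(1 : K), α, α ^ 2] i) ^ q ^ 2 = ![(1 : K), α, α ^ 2] i := by
      intro i
      fin_cases i
      · simp
      · simpa using h.symm
      · show (α ^ 2) ^ q ^ 2 = α ^ 2
        rw [← pow_mul, mul_comm, pow_mul, ← h]
    have hle := card_pow_le_of_forall_pow_eq (q ^ 2) (by nlinarith) hadd2 hsc2 _ hfix hind3
    rw [hq, Fintype.card_fin] at hle
    norm_num at hle
    have h23 : q ^ 2 < q ^ 3 := Nat.pow_lt_pow_right hq2 (by omega)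
    omega
  -- the fundamental linear relation
  have hfixS : (α + α ^ q ^ 2) ^ q ^ 2 = α + α ^ q ^ 2 := by
    rw [hadd2, hpow 2 2, hα4, add_comm]
  have hfixN : (α * α ^ q ^ 2) ^ q ^ 2 = α * α ^ q ^ 2 := by
    rw [mul_pow, hpow 2 2, hα4, mul_comm]
  have hdep : ¬ LinearIndependent F ![α + α ^ q ^ 2, (1 : K), α * α ^ q ^ 2] := by
    intro hind
    have hfix : ∀ i, (![α + α ^ q ^ 2, (1 : K), α * α ^ q ^ 2] i) ^ q ^ 2
        = ![α + α ^ q ^ 2, (1 : K), α * α ^ q ^ 2] i := by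
      intro i; fin_cases i <;> simp [hfixS, hfixN]
    have hle := card_pow_le_of_forall_pow_eq (q ^ 2) (by nlinarith) hadd2 hsc2 _ hfix hind
    rw [hq, Fintype.card_fin] at hle
    norm_num at hle
    have h23 : q ^ 2 < q ^ 3 := Nat.pow_lt_pow_right hq2 (by omega)
    omega
  rw [Fintype.not_linearIndependent_iff] at hdep
  obtain ⟨a, b, c, hrelK, hntriv⟩ :
      ∃ a b c : F, (algebraMap F K a * (α + α ^ q ^ 2) + algebraMap F K b
        = algebraMap F K c * (α * α ^ q ^ 2)) ∧ ¬(a = 0 ∧ b = 0 ∧ c = 0) := by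
    obtain ⟨g, hrel, i0, hi0⟩ := hdep
    refine ⟨g 0, g 1, -g 2, ?_, ?_⟩
    · simp only [Fin.sum_univ_three, Matrix.cons_val_zero, Matrix.cons_val_one,
        Matrix.head_cons, Algebra.smul_def, Matrix.cons_val_two, Matrix.tail_cons] at hrel
      rw [map_neg]
      linear_combination hrel
    · rintro ⟨h1, h2, h3⟩
      fin_cases i0
      · exact hi0 h1
      · exact hi0 h2
      · exact hi0 (by rw [← neg_eq_zero]; exact h3)
  -- Frobenius image of the relation
  have e1 : (α + α ^ q ^ 2) ^ q = α ^ q + α ^ q ^ 3 := by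
    rw [hadd, hpow1 2]
  have e2 : (α * α ^ q ^ 2) ^ q = α ^ q * α ^ q ^ 3 := by
    rw [mul_pow, hpow1 2]
  have hrelK' : algebraMap F K a * (α ^ q + α ^ q ^ 3) + algebraMap F K b
      = algebraMap F K c * (α ^ q * α ^ q ^ 3) := by
    have h := congrArg (fun z : K => z ^ q) hrelK
    rwa [hadd, mul_pow, e1, hsc, hsc, mul_pow, e2, hsc] at h
  -- degenerate coefficient facts
  have hc0a : c = 0 → a ≠ 0 := by
    intro hc ha
    have hA0 : algebraMap F K a = 0 := by rw [ha, map_zero]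
    have hC0 : algebraMap F K c = 0 := by rw [hc, map_zero]
    have hb : b = 0 := by
      apply hinj
      rw [map_zero]
      linear_combination hrelK - (α + α ^ q ^ 2) * hA0 + (α * α ^ q ^ 2) * hC0
    exact hntriv ⟨ha, hb, hc⟩
  -- nonvanishing denominators
  have hden : ∀ x : K, (∀ r : F, x ≠ algebraMap F K r) →
      algebraMap F K c * x + algebraMap F K (-a) ≠ 0 := by
    intro x hx h
    by_cases hc : c = 0
    · have hC0 : algebraMap F K c = 0 := by rw [hc, map_zero]
      rw [hC0, zero_mul, zero_add, map_neg, neg_eq_zero] at h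
      exact hc0a hc (hinj (by rw [h, map_zero]))
    · apply hx (c⁻¹ * a)
      have hCne : algebraMap F K c ≠ 0 := fun h0 => hc (hinj (by rw [h0, map_zero]))
      rw [_root_.map_mul, map_inv₀]
      rw [map_neg] at h
      field_simp
      linear_combination h
  have hnr0 : ∀ r : F, α ≠ algebraMap F K r := hnotF0
  have hnr1 : ∀ r : F, α ^ q ≠ algebraMap F K r := by
    intro r
    have := hnotF 1 (by omega) r
    rwa [pow_one] at this
  have hnr2 : ∀ r : F, α ^ q ^ 2 ≠ algebraMap F K r := hnotF 2 (by omega)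
  have hnr3 : ∀ r : F, α ^ q ^ 3 ≠ algebraMap F K r := hnotF 3 (by omega)
  -- determinant nonzero
  have hdet : a * (-a) - b * c ≠ 0 := by
    intro h0
    by_cases hc : c = 0
    · refine hc0a hc (mul_self_eq_zero.1 ?_)
      linear_combination -h0 - b * hc
    · have h0K : algebraMap F K a * (-(algebraMap F K a))
          - algebraMap F K b * algebraMap F K c = 0 := by
        have := congrArg (algebraMap F K) h0
        rw [map_zero] at this
        rw [← this, map_sub, _root_.map_mul, _root_.map_mul, map_neg]
      have key : (algebraMap F K c * α - algebraMap F K a)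
          * (algebraMap F K c * α ^ q ^ 2 - algebraMap F K a) = 0 := by
        linear_combination -(algebraMap F K c * hrelK) - h0K
      rcases mul_eq_zero.1 key with h1 | h1
      · refine hden α hnr0 ?_
        rw [map_neg]
        linear_combination h1
      · refine hden (α ^ q ^ 2) hnr2 ?_
        rw [map_neg]
        linear_combination h1
  -- the matrix
  have hdetM : (!![a, b; c, -a] : Matrix (Fin 2) (Fin 2) F).det ≠ 0 := by
    rw [Matrix.det_fin_two_of]
    exact hdet
  set Mg : GL (Fin 2) F := Matrix.GeneralLinearGroup.mkOfDetNeZero _ hdetM with hMg_def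
  have hMgval : (Mg : Matrix (Fin 2) (Fin 2) F) = !![a, b; c, -a] := rfl
  have hden4 : ∀ x : K, (∀ r : F, x ≠ algebraMap F K r) →
      algebraMap F K ((Mg : Matrix (Fin 2) (Fin 2) F) 1 0) * x
        + algebraMap F K ((Mg : Matrix (Fin 2) (Fin 2) F) 1 1) ≠ 0 := by
    intro x hx
    rw [hMgval]
    show algebraMap F K c * x + algebraMap F K (-a) ≠ 0
    exact hden x hx
  refine ⟨Mg, ?_, ?_, ?_, ?_, ?_, ?_⟩
  · refine mobius_pt _ _ _ ?_ ?_
    · rw [glmap_entry, glmap_entry]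
      exact hden4 α hnr0
    · rw [glmap_entry, glmap_entry, glmap_entry, glmap_entry, hMgval]
      show algebraMap F K a * α + algebraMap F K b
        = α ^ q ^ 2 * (algebraMap F K c * α + algebraMap F K (-a))
      rw [map_neg]
      linear_combination hrelK
  · refine mobius_pt _ _ _ ?_ ?_
    · rw [glmap_entry, glmap_entry]
      exact hden4 _ hnr2
    · rw [glmap_entry, glmap_entry, glmap_entry, glmap_entry, hMgval]
      show algebraMap F K a * α ^ q ^ 2 + algebraMap F K b
        = α * (algebraMap F K c * α ^ q ^ 2 + algebraMap F K (-a))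
      rw [map_neg]
      linear_combination hrelK
  · refine mobius_pt _ _ _ ?_ ?_
    · rw [glmap_entry, glmap_entry]
      exact hden4 _ hnr1
    · rw [glmap_entry, glmap_entry, glmap_entry, glmap_entry, hMgval]
      show algebraMap F K a * α ^ q + algebraMap F K b
        = α ^ q ^ 3 * (algebraMap F K c * α ^ q + algebraMap F K (-a))
      rw [map_neg]
      linear_combination hrelK'
  · refine mobius_pt _ _ _ ?_ ?_
    · rw [glmap_entry, glmap_entry]
      exact hden4 _ hnr3
    · rw [glmap_entry, glmap_entry, glmap_entry, glmap_entry, hMgval]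
      show algebraMap F K a * α ^ q ^ 3 + algebraMap F K b
        = α ^ q * (algebraMap F K c * α ^ q ^ 3 + algebraMap F K (-a))
      rw [map_neg]
      linear_combination hrelK'
  · -- involution
    intro p1
    have hs0 : a * a + b * c ≠ 0 := fun h => hdet (by linear_combination -h)
    have htK : algebraMap F K (a * a + b * c) ≠ 0 :=
      fun h => hs0 (hinj (by rw [h, map_zero]))
    have heqm : ((Matrix.GeneralLinearGroup.map (algebraMap F K) Mg
          * Matrix.GeneralLinearGroup.map (algebraMap F K) Mg : GL (Fin 2) K)
            : Matrix (Fin 2) (Fin 2) K)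
        = algebraMap F K (a * a + b * c) • ((1 : GL (Fin 2) K) : Matrix (Fin 2) (Fin 2) K) := by
      rw [Units.val_mul, Units.val_one]
      ext i j
      rw [Matrix.mul_apply, Fin.sum_univ_two, glmap_entry, glmap_entry, glmap_entry,
        glmap_entry, hMgval, Matrix.smul_apply]
      fin_cases i <;> fin_cases j <;>
        simp [Matrix.one_apply, map_add, _root_.map_mul, map_neg] <;> ring
    rw [← mobius_mul,
      mobius_smul_eq 1 _ (algebraMap F K (a * a + b * c)) htK heqm p1, mobius_one]
  · -- uniqueness
    intro M' h1' h2' h3' h4'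
    have r1 := mobius_pt_rev _ _ _ h1'
    have r2 := mobius_pt_rev _ _ _ h2'
    rw [glmap_entry, glmap_entry, glmap_entry, glmap_entry] at r1 r2
    set a' : F := (M' : Matrix (Fin 2) (Fin 2) F) 0 0 with ha'
    set b' : F := (M' : Matrix (Fin 2) (Fin 2) F) 0 1 with hb'
    set c' : F := (M' : Matrix (Fin 2) (Fin 2) F) 1 0 with hc'
    set d' : F := (M' : Matrix (Fin 2) (Fin 2) F) 1 1 with hd'
    have hne : α - α ^ q ^ 2 ≠ 0 := sub_ne_zero.2 hne13
    have hAD : algebraMap F K a' + algebraMap F K d' = 0 := by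
      have h2 : (algebraMap F K a' + algebraMap F K d') * (α - α ^ q ^ 2) = 0 := by
        linear_combination r1 - r2
      exact (mul_eq_zero.1 h2).resolve_right hne
    have hd'F : d' = -a' := hinj (by rw [map_neg]; linear_combination hAD)
    have r : algebraMap F K a' * (α + α ^ q ^ 2) + algebraMap F K b'
        = algebraMap F K c' * (α * α ^ q ^ 2) := by
      linear_combination r1 + α ^ q ^ 2 * hAD
    have hdet' : a' * d' - b' * c' ≠ 0 := by
      have hu : IsUnit (M' : Matrix (Fin 2) (Fin 2) F).det :=
        (Matrix.isUnit_iff_isUnit_det _).1 M'.isUnit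
      rw [Matrix.det_fin_two] at hu
      exact hu.ne_zero
    have hprop : ∃ t : F, t ≠ 0 ∧ (M' : Matrix (Fin 2) (Fin 2) F) = t • !![a, b; c, -a] := by
      by_cases hS : ∃ s : F, α + α ^ q ^ 2 = algebraMap F K s
      · obtain ⟨s, hs⟩ := hS
        have hNnot : ∀ r : F, α * α ^ q ^ 2 ≠ algebraMap F K r := by
          intro r0 hNr
          have haev : (Polynomial.aeval α)
              (X ^ 2 - Polynomial.C s * X + Polynomial.C r0) = 0 := by
            rw [map_add, map_sub, map_pow, aeval_X, _root_.map_mul, aeval_C, aeval_C, aeval_X]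
            linear_combination α * hs - hNr
          have hdvd := minpoly.dvd F α haev
          rw [hmin] at hdvd
          have hne0 : (X ^ 2 - Polynomial.C s * X + Polynomial.C r0 : Polynomial F) ≠ 0 := by
            intro h0
            have hcoeff := congrArg (fun P : Polynomial F => Polynomial.coeff P 2) h0
            simp [Polynomial.coeff_X_pow, Polynomial.coeff_C] at hcoeff
          have hle := Polynomial.natDegree_le_of_dvd hdvd hne0
          have hle2 : (X ^ 2 - Polynomial.C s * X + Polynomial.C r0 : Polynomial F).natDegree
              ≤ 2 := by compute_degree
          omega
        have hNC : ∀ u v w : F, (algebraMap F K u * (α + α ^ q ^ 2) + algebraMap F K v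
            = algebraMap F K w * (α * α ^ q ^ 2)) → w = 0 ∧ u * s + v = 0 := by
          intro u v w hrel0
          have hwz : w = 0 := by
            by_contra hw
            have hWne : algebraMap F K w ≠ 0 := fun h0 => hw (hinj (by rw [h0, map_zero]))
            apply hNnot (w⁻¹ * (u * s + v))
            rw [_root_.map_mul, map_inv₀, map_add, _root_.map_mul]
            have hval : algebraMap F K w * (α * α ^ q ^ 2)
                = algebraMap F K u * algebraMap F K s + algebraMap F K v := by
              linear_combination algebraMap F K u * hs - hrel0
            field_simp
            linear_combination hval
          refine ⟨hwz, hinj ?_⟩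
          rw [map_add, _root_.map_mul, map_zero]
          have hW0 : algebraMap F K w = 0 := by rw [hwz, map_zero]
          linear_combination hrel0 - algebraMap F K u * hs + (α * α ^ q ^ 2) * hW0
        obtain ⟨hcz, habs⟩ := hNC a b c hrelK
        obtain ⟨hcz', habs'⟩ := hNC a' b' c' r
        have haz : a ≠ 0 := hc0a hcz
        have haz' : a' ≠ 0 := by
          intro h0
          exact hdet' (by rw [hd'F, hcz', h0]; ring)
        refine ⟨a' * a⁻¹, mul_ne_zero haz' (inv_ne_zero haz), ?_⟩
        ext i j
        fin_cases i <;> fin_cases j <;>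
          simp only [Matrix.smul_apply, Matrix.cons_val', Matrix.cons_val_zero,
            Matrix.cons_val_one, Matrix.head_cons, Matrix.head_fin_const, Matrix.empty_val',
            Matrix.cons_val_fin_one, smul_eq_mul, Matrix.of_apply, Matrix.cons_val_two,
            Matrix.tail_cons]
        · show a' = a' * a⁻¹ * a
          field_simp
        · show b' = a' * a⁻¹ * b
          field_simp
          linear_combination a * habs' - a' * habs
        · show c' = a' * a⁻¹ * c
          rw [hcz, hcz']; ring
        · show d' = a' * a⁻¹ * -a
          rw [hd'F]; field_simp
      · have hSnot : ∀ s : F, α + α ^ q ^ 2 ≠ algebraMap F K s := by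
          push_neg at hS; exact hS
        have hcomb : algebraMap F K (c' * a - c * a') * (α + α ^ q ^ 2)
            + algebraMap F K (c' * b - c * b') = 0 := by
          rw [map_sub, map_sub, _root_.map_mul, _root_.map_mul, _root_.map_mul, _root_.map_mul]
          linear_combination algebraMap F K c' * hrelK - algebraMap F K c * r
        obtain ⟨huv, hwv⟩ : c' * a - c * a' = 0 ∧ c' * b - c * b' = 0 := by
          set u : F := c' * a - c * a'
          set w : F := c' * b - c * b'
          by_cases hu : u = 0
          · refine ⟨hu, hinj ?_⟩
            rw [map_zero]
            have hu0 : algebraMap F K u = 0 := by rw [hu, map_zero]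
            linear_combination hcomb - (α + α ^ q ^ 2) * hu0
          · exfalso
            have hUne : algebraMap F K u ≠ 0 := fun h0 => hu (hinj (by rw [h0, map_zero]))
            apply hSnot (-(u⁻¹ * w))
            rw [map_neg, _root_.map_mul, map_inv₀]
            field_simp
            linear_combination hcomb
        have hcnz : c ≠ 0 := by
          intro hcz
          have haz := hc0a hcz
          have hAne : algebraMap F K a ≠ 0 := fun h0 => haz (hinj (by rw [h0, map_zero]))
          apply hSnot (-(a⁻¹ * b))
          rw [map_neg, _root_.map_mul, map_inv₀]
          have hC0 : algebraMap F K c = 0 := by rw [hcz, map_zero]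
          have hABrel : algebraMap F K a * (α + α ^ q ^ 2) + algebraMap F K b = 0 := by
            linear_combination hrelK + (α * α ^ q ^ 2) * hC0
          field_simp
          linear_combination hABrel
        have hcnz' : c' ≠ 0 := by
          intro h0
          have ha'0 : a' = 0 := by
            have hca : c * a' = 0 := by linear_combination -huv + a * h0
            exact (mul_eq_zero.1 hca).resolve_left hcnz
          have hb'0 : b' = 0 := by
            have hcb : c * b' = 0 := by linear_combination -hwv + b * h0
            exact (mul_eq_zero.1 hcb).resolve_left hcnz
          exact hdet' (by rw [ha'0, hb'0]; ring)
        refine ⟨c' * c⁻¹, mul_ne_zero hcnz' (inv_ne_zero hcnz), ?_⟩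
        ext i j
        fin_cases i <;> fin_cases j <;>
          simp only [Matrix.smul_apply, Matrix.cons_val', Matrix.cons_val_zero,
            Matrix.cons_val_one, Matrix.head_cons, Matrix.head_fin_const, Matrix.empty_val',
            Matrix.cons_val_fin_one, smul_eq_mul, Matrix.of_apply, Matrix.cons_val_two,
            Matrix.tail_cons]
        · show a' = c' * c⁻¹ * a
          field_simp
          linear_combination -huv
        · show b' = c' * c⁻¹ * b
          field_simp
          linear_combination -hwv
        · show c' = c' * c⁻¹ * c
          field_simp
        · show d' = c' * c⁻¹ * -a
          rw [hd'F]
          field_simp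
          linear_combination huv
    obtain ⟨t, ht, hMM⟩ := hprop
    intro p1
    refine mobius_smul_eq _ _ (algebraMap F K t)
      (fun h => ht (hinj (by rw [h, map_zero]))) ?_ p1
    ext i j
    rw [glmap_entry, Matrix.smul_apply, glmap_entry, hMM, hMgval, Matrix.smul_apply,
      smul_eq_mul, smul_eq_mul, _root_.map_mul]
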